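/- arXiv:2504.11525 — 2 statements merged into one kernel-verified Lean document; each statement's English description precedes it below -/
import Mathlib

section
/- Let n ≥ 2 and d : Fin n → ℕ with d j ≥ 2 for every j, and set S = ∑ j, (d j − 1). The subspace of EuclideanSpace ℂ ((j : Fin n) → Fin (d j)) spanned by the states 𝔊_n^k for 1 ≤ k ≤ S − 1 has finrank S − 1, and every nonzero vector in this span is genuinely multipartite entangled; i.e., this span is a GES of dimension S − 1. -/
noncomputable def gFrak (n : ℕ) (d : Fin n → ℕ) (k : ℕ) :
    EuclideanSpace ℂ ((j : Fin n) → Fin (d j)) :=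
  WithLp.toLp 2 (fun i => if (∑ j, ((i j : ℕ))) = k then 1 else 0)

def Biseparable {n : ℕ} {d : Fin n → ℕ} (T : Set (Fin n))
    (ψ : EuclideanSpace ℂ ((j : Fin n) → Fin (d j))) : Prop :=
  ∃ (φ : ((j : T) → Fin (d j.val)) → ℂ) (χ : ((j : ↥Tᶜ) → Fin (d j.val)) → ℂ),
    ∀ i, ψ i = φ (fun j => i j.val) * χ (fun j => i j.val)

def GME {n : ℕ} {d : Fin n → ℕ}
    (ψ : EuclideanSpace ℂ ((j : Fin n) → Fin (d j))) : Prop :=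
  ψ ≠ 0 ∧ ∀ T : Set (Fin n), T ≠ ∅ → T ≠ Set.univ → ¬ Biseparable T ψ

private lemma exists_sum_eq {n : ℕ} (d : Fin n → ℕ) (hd : ∀ j, 1 ≤ d j)
    (s : Finset (Fin n)) :
    ∀ k, k ≤ ∑ j ∈ s, (d j - 1) →
      ∃ f : Fin n → ℕ, (∀ j, f j < d j) ∧ ∑ j ∈ s, f j = k := by
  classical
  induction s using Finset.induction_on with
  | empty =>
      intro k hk
      simp only [Finset.sum_empty, Nat.le_zero] at hk
      exact ⟨fun _ => 0, fun j => hd j, by simp [hk]⟩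
  | @insert a s ha ih =>
      intro k hk
      rw [Finset.sum_insert ha] at hk
      obtain ⟨g, hg1, hg2⟩ := ih (k - min k (d a - 1)) (by omega)
      refine ⟨Function.update g a (min k (d a - 1)), ?_, ?_⟩
      · intro j
        rcases eq_or_ne j a with rfl | h
        · rw [Function.update_self]; have := hd j; omega
        · rw [Function.update_of_ne h]; exact hg1 j
      · rw [Finset.sum_insert ha, Function.update_self,
          Finset.sum_congr rfl fun j hj =>
            Function.update_of_ne (ne_of_mem_of_not_mem hj ha) _ _, hg2]
        omega

/-- Lemma 6: the span of the states `𝔊_n^k` for `1 ≤ k ≤ S − 1`, where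
`S = ∑ j (d j − 1)`, is a GES of dimension `S − 1`. -/
theorem gFrak_span_GES (n : ℕ) (hn : 2 ≤ n) (d : Fin n → ℕ) (hd : ∀ j, 2 ≤ d j)
    (S : ℕ) (hS : S = ∑ j, (d j - 1)) :
    Module.finrank ℂ
        ↥(Submodule.span ℂ
            {ψ | ∃ k, 1 ≤ k ∧ k ≤ S - 1 ∧ ψ = gFrak n d k}) = S - 1 ∧
    ∀ ψ ∈ Submodule.span ℂ {ψ | ∃ k, 1 ≤ k ∧ k ≤ S - 1 ∧ ψ = gFrak n d k},
      ψ ≠ 0 → GME ψ := by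
  classical
  have hd1 : ∀ j, 1 ≤ d j := fun j => le_trans (by norm_num) (hd j)
  have hS2 : 2 ≤ S := by
    rw [hS]
    calc (2:ℕ) ≤ n := hn
      _ = ∑ _j : Fin n, 1 := by simp
      _ ≤ _ := Finset.sum_le_sum fun j _ => by have := hd j; omega
  set K : Finset ℕ := Finset.Icc 1 (S - 1) with hK
  set b : ↥K → EuclideanSpace ℂ ((j : Fin n) → Fin (d j)) :=
    fun k => gFrak n d k with hb
  have hset : {ψ | ∃ k, 1 ≤ k ∧ k ≤ S - 1 ∧ ψ = gFrak n d k} = Set.range b := by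
    ext ψ
    constructor
    · rintro ⟨k, hk1, hk2, rfl⟩
      exact ⟨⟨k, Finset.mem_Icc.2 ⟨hk1, hk2⟩⟩, rfl⟩
    · rintro ⟨⟨k, hk⟩, rfl⟩
      obtain ⟨h1, h2⟩ := Finset.mem_Icc.1 hk
      exact ⟨k, h1, h2, rfl⟩
  have hexists : ∀ k, k ≤ S →
      ∃ i : (j : Fin n) → Fin (d j), (∑ j, ((i j : ℕ))) = k := by
    intro k hk
    obtain ⟨f, hf1, hf2⟩ := exists_sum_eq d hd1 Finset.univ k (hS ▸ hk)
    exact ⟨fun j => ⟨f j, hf1 j⟩, hf2⟩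
  -- key summation helper
  have hsum : ∀ (a : ↥K → ℂ) (m : ℕ),
      (∑ k : ↥K, a k * (if m = (k : ℕ) then (1:ℂ) else 0))
        = if h : m ∈ K then a ⟨m, h⟩ else 0 := by
    intro a m
    by_cases hm : m ∈ K
    · rw [dif_pos hm]
      rw [Finset.sum_congr rfl (fun k _ => ?_), Finset.sum_ite_eq' Finset.univ ⟨m, hm⟩ a]
      · simp
      · by_cases h : k = (⟨m, hm⟩ : ↥K)
        · subst h; simp
        · rw [if_neg h, if_neg, mul_zero]
          exact fun hh => h (Subtype.ext hh.symm)
    · rw [dif_neg hm]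
      refine Finset.sum_eq_zero fun k _ => ?_
      rw [if_neg, mul_zero]
      intro hh
      exact hm (hh ▸ k.2)
  have happly : ∀ (a : ↥K → ℂ) (i : (j : Fin n) → Fin (d j)),
      (∑ k : ↥K, a k • b k) i = ∑ k : ↥K, a k * (if (∑ j, ((i j : ℕ))) = (k:ℕ) then (1:ℂ) else 0) := by
    intro a i
    rw [WithLp.ofLp_sum, Finset.sum_apply i Finset.univ fun k => (a k • b k).ofLp]
    rfl
  have hli : LinearIndependent ℂ b := by
    rw [Fintype.linearIndependent_iff]
    intro g hg k0
    obtain ⟨hk01, hk02⟩ := Finset.mem_Icc.1 k0.2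
    obtain ⟨i0, hi0⟩ := hexists k0 (by omega)
    have h0 : (∑ k : ↥K, g k • b k) i0 = 0 := by rw [hg]; rfl
    rw [happly g i0, hi0, hsum g (k0 : ℕ), dif_pos k0.2] at h0
    simpa using h0
  constructor
  · rw [hset, finrank_span_eq_card hli]
    simp only [Fintype.card_coe, hK, Nat.card_Icc]
    omega
  · intro ψ hmem hψ0
    rw [hset] at hmem
    obtain ⟨c, hc⟩ := (Submodule.mem_span_range_iff_exists_fun ℂ).1 hmem
    set cext : ℕ → ℂ := fun m => if h : m ∈ K then c ⟨m, h⟩ else 0 with hcext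
    have heval : ∀ i : (j : Fin n) → Fin (d j), ψ i = cext (∑ j, ((i j : ℕ))) := by
      intro i
      rw [← hc, happly c i, hsum c _]
    refine ⟨hψ0, ?_⟩
    intro T hTne hTu hbisep
    obtain ⟨φ, χ, hsep⟩ := hbisep
    set A : Finset (Fin n) := Finset.univ.filter (· ∈ T) with hA
    have hmemA : ∀ j, j ∈ A ↔ j ∈ T := by intro j; simp [hA]
    obtain ⟨a, haT⟩ := Set.nonempty_iff_ne_empty.2 hTne
    obtain ⟨a', ha'T⟩ := Set.ne_univ_iff_exists_notMem T |>.1 hTu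
    set SA : ℕ := ∑ j ∈ A, (d j - 1) with hSA
    set SB : ℕ := ∑ j ∈ Aᶜ, (d j - 1) with hSB
    have hSAB : SA + SB = S := by rw [hS]; exact Finset.sum_add_sum_compl A _
    have hSA1 : 1 ≤ SA := by
      have h1 : d a - 1 ≤ SA := by
        rw [hSA]
        exact Finset.single_le_sum (f := fun j => d j - 1) (fun j _ => Nat.zero_le _)
          ((hmemA a).2 haT)
      have := hd a; omega
    have hSB1 : 1 ≤ SB := by
      have ha'A : a' ∈ Aᶜ := by
        rw [Finset.mem_compl, hmemA]; exact ha'T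
      have h1 : d a' - 1 ≤ SB := by
        rw [hSB]
        exact Finset.single_le_sum (f := fun j => d j - 1) (fun j _ => Nat.zero_le _) ha'A
      have := hd a'; omega
    have hchA : ∀ s : ℕ, ∃ f : Fin n → ℕ,
        (∀ j, f j < d j) ∧ (s ≤ SA → ∑ j ∈ A, f j = s) := by
      intro s
      by_cases h : s ≤ SA
      · obtain ⟨f, h1, h2⟩ := exists_sum_eq d hd1 A s h
        exact ⟨f, h1, fun _ => h2⟩
      · exact ⟨fun _ => 0, fun j => hd1 j, fun hs => absurd hs h⟩
    have hchB : ∀ t : ℕ, ∃ f : Fin n → ℕ,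
        (∀ j, f j < d j) ∧ (t ≤ SB → ∑ j ∈ Aᶜ, f j = t) := by
      intro t
      by_cases h : t ≤ SB
      · obtain ⟨f, h1, h2⟩ := exists_sum_eq d hd1 Aᶜ t h
        exact ⟨f, h1, fun _ => h2⟩
      · exact ⟨fun _ => 0, fun j => hd1 j, fun hs => absurd hs h⟩
    choose fA hfA1 hfA2 using hchA
    choose fB hfB1 hfB2 using hchB
    set F : ℕ → ℂ := fun s => φ (fun j => ⟨fA s j.val, hfA1 s j.val⟩) with hF
    set G : ℕ → ℂ := fun t => χ (fun j => ⟨fB t j.val, hfB1 t j.val⟩) with hG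
    have key : ∀ s t, s ≤ SA → t ≤ SB → cext (s + t) = F s * G t := by
      intro s t hs ht
      set i : (j : Fin n) → Fin (d j) := fun j =>
        if h : j ∈ A then (⟨fA s j, hfA1 s j⟩ : Fin (d j)) else ⟨fB t j, hfB1 t j⟩ with hi
      have hsumi : (∑ j, ((i j : ℕ))) = s + t := by
        rw [← Finset.sum_add_sum_compl A]
        have e1 : ∑ j ∈ A, ((i j : ℕ)) = s := by
          rw [Finset.sum_congr rfl fun j hj => ?_, hfA2 s hs]
          simp only [hi, dif_pos hj]
        have e2 : ∑ j ∈ Aᶜ, ((i j : ℕ)) = t := by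
          rw [Finset.sum_congr rfl fun j hj => ?_, hfB2 t ht]
          simp only [hi, dif_neg (Finset.mem_compl.1 hj)]
        rw [e1, e2]
      have hφ : (fun (j : ↥T) => i j.val) =
          (fun (j : ↥T) => (⟨fA s j.val, hfA1 s j.val⟩ : Fin (d j.val))) := by
        funext j
        have : (j : Fin n) ∈ A := (hmemA j).2 j.2
        simp only [hi, dif_pos this]
      have hχ : (fun (j : ↥Tᶜ) => i j.val) =
          (fun (j : ↥Tᶜ) => (⟨fB t j.val, hfB1 t j.val⟩ : Fin (d j.val))) := by
        funext j
        have : (j : Fin n) ∉ A := fun h => j.2 ((hmemA j).1 h)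
        simp only [hi, dif_neg this]
      calc cext (s + t) = ψ i := by rw [heval i, hsumi]
        _ = φ (fun j => i j.val) * χ (fun j => i j.val) := hsep i
        _ = F s * G t := by rw [hφ, hχ]
    have descent : ∀ k, 1 ≤ k → k ≤ S - 1 → cext k ≠ 0 → cext (k - 1) ≠ 0 := by
      intro k hk1 hk2 hck
      set t : ℕ := min k SB with ht
      set s : ℕ := k - t with hs
      have hst : s + t = k := by omega
      have ht1 : 1 ≤ t := by omega
      have htB : t ≤ SB := by omega
      have hsA : s + 1 ≤ SA := by omega
      have h1 : cext k = F s * G t := by rw [← hst]; exact key s t (by omega) htB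
      have h2 : cext k = F (s + 1) * G (t - 1) := by
        have : (s + 1) + (t - 1) = k := by omega
        rw [← this]; exact key (s + 1) (t - 1) hsA (by omega)
      have hFs : F s ≠ 0 := fun h => hck (by rw [h1, h, zero_mul])
      have hGt1 : G (t - 1) ≠ 0 := fun h => hck (by rw [h2, h, mul_zero])
      have h3 : cext (k - 1) = F s * G (t - 1) := by
        have : s + (t - 1) = k - 1 := by omega
        rw [← this]; exact key s (t - 1) (by omega) (by omega)
      rw [h3]
      exact mul_ne_zero hFs hGt1
    have hzero : ∀ k, k ≤ S - 1 → cext k ≠ 0 → False := by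
      intro k
      induction k with
      | zero =>
          intro _ h
          exact h (dif_neg (by simp [hK]))
      | succ k ih =>
          intro hk hne
          have h := descent (k + 1) (by omega) hk hne
          rw [Nat.add_sub_cancel] at h
          exact ih (by omega) h
    have hex : ∃ i, ψ i ≠ 0 := by
      by_contra h
      push_neg at h
      exact hψ0 (by refine PiLp.ext fun i => ?_; exact h i)
    obtain ⟨i, hi⟩ := hex
    have hcm : cext (∑ j, ((i j : ℕ))) ≠ 0 := fun h => hi (by rw [heval i, h])
    have hmK : (∑ j, ((i j : ℕ))) ∈ K := by
      by_contra h
      exact hcm (dif_neg h)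
    obtain ⟨h1, h2⟩ := Finset.mem_Icc.1 hmK
    exact hzero _ h2 hcm
end

section
/- Let n ≥ 2 and d : Fin n → ℕ with d j ≥ 2 for every j; set S = ∑ j, (d j − 1) and D = ∏ j, d j. Let W be the span in EuclideanSpace ℂ ((j : Fin n) → Fin (d j)) of the states {𝔊_n^k : 0 ≤ k ≤ S}. Then the multipartite space decomposes as the orthogonal direct sum of: (i) the span of the two coordinate basis vectors e_{(0,…,0)} and e_{(d_1−1,…,d_n−1)}; (ii) the span of {𝔊_n^k : 1 ≤ k ≤ S−1}, which has finrank S − 1 and all of whose nonzero vectors are GME; and (iii) the orthogonal complement Wᗮ, which has finrank D − S − 1 and contains no nonzero fully product vector (a CES of the maximal possible dimension). -/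
open Finset
open scoped InnerProductSpace

/-- A vector of the multipartite space is *fully product* if it is a simple tensor. -/
def FullyProduct {n : ℕ} {d : Fin n → ℕ}
    (ψ : EuclideanSpace ℂ ((j : Fin n) → Fin (d j))) : Prop :=
  ∃ φ : (j : Fin n) → Fin (d j) → ℂ, ∀ i, ψ i = ∏ j, φ j (i j)

/-- For any `k` at most the sum over `s` of the coordinate maxima, there is a tuple
whose coordinates sum (over `s`) to `k`. -/
lemma exists_tuple_sum_eq {n : ℕ} (d : Fin n → ℕ) (hd : ∀ j, 1 ≤ d j)
    (s : Finset (Fin n)) :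
    ∀ k, k ≤ ∑ j ∈ s, (d j - 1) →
    ∃ i : (j : Fin n) → Fin (d j), ∑ j ∈ s, ((i j : ℕ)) = k := by
  classical
  induction s using Finset.induction with
  | empty =>
      intro k hk
      have hk0 : k = 0 := by simpa using hk
      exact ⟨fun j => ⟨0, hd j⟩, by simp [hk0]⟩
  | @insert a s ha ih =>
      intro k hk
      rw [Finset.sum_insert ha] at hk
      have hva : min k (d a - 1) < d a := by have := hd a; omega
      obtain ⟨i, hi⟩ := ih (k - min k (d a - 1)) (by omega)
      refine ⟨Function.update i a ⟨min k (d a - 1), hva⟩, ?_⟩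
      rw [Finset.sum_insert ha, Function.update_self]
      have hrest : ∑ j ∈ s, ((Function.update i a ⟨min k (d a - 1), hva⟩ j : ℕ))
          = ∑ j ∈ s, ((i j : ℕ)) := by
        refine Finset.sum_congr rfl fun j hj => ?_
        rw [Function.update_of_ne (by rintro rfl; exact ha hj)]
      rw [hrest, hi]
      simp only [Fin.val_mk]
      omega

/-- Distinct `gFrak` states are orthogonal. -/
lemma gFrak_inner_zero {n : ℕ} (d : Fin n → ℕ) {k k' : ℕ} (h : k ≠ k') :
    ⟪gFrak n d k, gFrak n d k'⟫_ℂ = 0 := by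
  rw [PiLp.inner_apply]
  refine Finset.sum_eq_zero fun i _ => ?_
  by_cases hh : (∑ j, ((i j : ℕ))) = k
  · simp [RCLike.inner_apply, gFrak, hh, h]
  · simp [RCLike.inner_apply, gFrak, hh]

/-- The `gFrak` (with distinct admissible indices) are linearly independent. -/
lemma gFrak_linearIndependent {n : ℕ} (d : Fin n → ℕ) (hd : ∀ j, 1 ≤ d j)
    {N : ℕ} (e : Fin N → ℕ) (he : Function.Injective e)
    (heS : ∀ m, e m ≤ ∑ j, (d j - 1)) :
    LinearIndependent ℂ (fun m : Fin N => gFrak n d (e m)) := by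
  rw [Fintype.linearIndependent_iff]
  intro g hg m
  obtain ⟨i, hi⟩ := exists_tuple_sum_eq d hd Finset.univ (e m) (heS m)
  have h2 : (∑ m' : Fin N, g m' • gFrak n d (e m')) i = 0 := by rw [hg]; rfl
  rw [WithLp.ofLp_sum, Finset.sum_apply] at h2
  have h3 : ∀ m' : Fin N, (g m' • gFrak n d (e m')) i
      = g m' * (if m = m' then 1 else 0) := by
    intro m'
    have : (gFrak n d (e m')) i = (if m = m' then (1:ℂ) else 0) := by
      by_cases hmm : m = m'
      · simp [gFrak, hi, hmm]
      · have : e m ≠ e m' := fun hc => hmm (he hc)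
        simp [gFrak, hi, hmm, this]
    calc (g m' • gFrak n d (e m')) i = g m' * (gFrak n d (e m')) i := rfl
    _ = g m' * (if m = m' then 1 else 0) := by rw [this]
  rw [Finset.sum_congr rfl fun m' _ => h3 m'] at h2
  simpa using h2

/-- Key vanishing lemma: a rank-one "Hankel" function vanishing at the two
extremes vanishes identically. -/
lemma key_vanish (f : ℕ → ℂ) (S₁ S₂ : ℕ) (h1 : 1 ≤ S₁) (h2 : 1 ≤ S₂)
    (hf0 : f 0 = 0) (hfS : f (S₁ + S₂) = 0)
    (H : ∀ x x' y y', x ≤ S₁ → x' ≤ S₁ → y ≤ S₂ → y' ≤ S₂ →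
        f (x + y) * f (x' + y') = f (x + y') * f (x' + y)) :
    ∀ k, k ≤ S₁ + S₂ → f k = 0 := by
  have main : ∀ m k, k ≤ S₁ + S₂ → S₁ + S₂ - k ≤ m → f k = 0 := by
    intro m
    induction m with
    | zero =>
        intro k hk hm
        have : k = S₁ + S₂ := by omega
        rw [this]; exact hfS
    | succ m ih =>
        intro k hk hm
        by_contra hfk
        rcases le_or_gt k S₁ with hk1 | hk1 <;> rcases le_or_gt k S₂ with hk2 | hk2
        · -- k ≤ S₁, k ≤ S₂ : f k ^ 2 = f 0 * f (2k) = 0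
          have h := H 0 k k 0 (Nat.zero_le _) hk1 hk2 (Nat.zero_le _)
          simp only [Nat.zero_add, Nat.add_zero] at h
          rw [hf0, zero_mul] at h
          exact hfk (mul_self_eq_zero.mp h)
        · -- k ≤ S₁, S₂ < k : propagate to k + S₂
          have h := H (k - S₂) k S₂ 0 (by omega) hk1 le_rfl (Nat.zero_le _)
          have e1 : k - S₂ + S₂ = k := by omega
          rw [e1, Nat.add_zero] at h
          have hnz : f (k + S₂) ≠ 0 := by
            intro hz
            rw [hz, mul_zero] at h
            exact (mul_ne_zero hfk hfk) h
          exact hnz (ih (k + S₂) (by omega) (by omega))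
        · -- S₁ < k, k ≤ S₂ : propagate to S₁ + k
          have h := H S₁ 0 (k - S₁) k le_rfl (Nat.zero_le _) (by omega) hk2
          have e1 : S₁ + (k - S₁) = k := by omega
          rw [e1, Nat.zero_add, Nat.zero_add] at h
          have hnz : f (S₁ + k) ≠ 0 := by
            intro hz
            rw [hz, zero_mul] at h
            exact (mul_ne_zero hfk hfk) h
          exact hnz (ih (S₁ + k) (by omega) (by omega))
        · -- S₁ < k, S₂ < k : f k ^ 2 = f (...) * f (S₁ + S₂) = 0
          have h := H (k - S₂) S₁ S₂ (k - S₁) (by omega) le_rfl le_rfl (by omega)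
          have e1 : k - S₂ + S₂ = k := by omega
          have e2 : S₁ + (k - S₁) = k := by omega
          rw [e1, e2, hfS, mul_zero] at h
          exact hfk (mul_self_eq_zero.mp h)
  intro k hk
  exact main (S₁ + S₂) k hk (by omega)

/-- Any nonzero vector whose coordinates depend only on the coordinate sum, with
vanishing extreme coefficients, is GME. -/
lemma gme_of_sum_dependent {n : ℕ} (d : Fin n → ℕ) (hd : ∀ j, 2 ≤ d j)
    (f : ℕ → ℂ) (hf0 : f 0 = 0) (hfS : f (∑ j, (d j - 1)) = 0)
    (ψ : EuclideanSpace ℂ ((j : Fin n) → Fin (d j)))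
    (hψ : ∀ i, ψ i = f (∑ j, ((i j : ℕ))))
    (hne : ψ ≠ 0) : GME ψ := by
  classical
  have hd1 : ∀ j, 1 ≤ d j := fun j => le_trans one_le_two (hd j)
  refine ⟨hne, fun T hT hT' hbp => ?_⟩
  obtain ⟨φ, χ, hφχ⟩ := hbp
  set Tf := T.toFinset with hTf
  set S₁ := ∑ j ∈ Tf, (d j - 1) with hS₁
  set S₂ := ∑ j ∈ Tfᶜ, (d j - 1) with hS₂
  have hsplit : (∑ j, (d j - 1)) = S₁ + S₂ := (Finset.sum_add_sum_compl Tf _).symm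
  have h1 : 1 ≤ S₁ := by
    obtain ⟨j, hj⟩ := Set.nonempty_iff_ne_empty.mpr hT
    have hjm : j ∈ Tf := Set.mem_toFinset.mpr hj
    calc 1 ≤ d j - 1 := by have := hd j; omega
    _ ≤ S₁ := Finset.single_le_sum (f := fun j => d j - 1) (fun _ _ => Nat.zero_le _) hjm
  have h2 : 1 ≤ S₂ := by
    have hTc : Tᶜ ≠ ∅ := by
      intro hc
      exact hT' (by simpa [Set.compl_empty_iff] using hc)
    obtain ⟨j, hj⟩ := Set.nonempty_iff_ne_empty.mpr hTc
    have hjm : j ∈ Tfᶜ := by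
      rw [Finset.mem_compl, hTf, Set.mem_toFinset]
      exact hj
    calc 1 ≤ d j - 1 := by have := hd j; omega
    _ ≤ S₂ := Finset.single_le_sum (f := fun j => d j - 1) (fun _ _ => Nat.zero_le _) hjm
  -- the combination identity
  have hkey : ∀ u w : (j : Fin n) → Fin (d j),
      f ((∑ j ∈ Tf, ((u j : ℕ))) + ∑ j ∈ Tfᶜ, ((w j : ℕ)))
        = φ (fun j => u j.val) * χ (fun j => w j.val) := by
    intro u w
    set cw : (j : Fin n) → Fin (d j) := fun j => if j ∈ T then u j else w j with hcw
    have hsum : (∑ j, ((cw j : ℕ)))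
        = (∑ j ∈ Tf, ((u j : ℕ))) + ∑ j ∈ Tfᶜ, ((w j : ℕ)) := by
      rw [← Finset.sum_add_sum_compl Tf (fun j => ((cw j : ℕ)))]
      congr 1
      · refine Finset.sum_congr rfl fun j hj => ?_
        have hjT : j ∈ T := Set.mem_toFinset.mp hj
        simp only [hcw]
        rw [if_pos hjT]
      · refine Finset.sum_congr rfl fun j hj => ?_
        have hjT : j ∉ T := by
          have := Finset.mem_compl.mp hj
          rwa [hTf, Set.mem_toFinset] at this
        simp only [hcw]
        rw [if_neg hjT]
    have happ := hφχ cw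
    rw [hψ] at happ
    rw [hsum] at happ
    rw [happ]
    congr 1
    · congr 1
      funext j
      simp only [hcw]
      rw [if_pos j.2]
    · congr 1
      funext j
      have hj : (j : Fin n) ∉ T := j.2
      simp only [hcw]
      rw [if_neg hj]
  -- the rank-one identity H
  have H : ∀ x x' y y', x ≤ S₁ → x' ≤ S₁ → y ≤ S₂ → y' ≤ S₂ →
      f (x + y) * f (x' + y') = f (x + y') * f (x' + y) := by
    intro x x' y y' hx hx' hy hy'
    obtain ⟨u, hu⟩ := exists_tuple_sum_eq d hd1 Tf x hx
    obtain ⟨u', hu'⟩ := exists_tuple_sum_eq d hd1 Tf x' hx'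
    obtain ⟨w, hw⟩ := exists_tuple_sum_eq d hd1 Tfᶜ y hy
    obtain ⟨w', hw'⟩ := exists_tuple_sum_eq d hd1 Tfᶜ y' hy'
    have e1 : f (x + y) = φ (fun j => u j.val) * χ (fun j => w j.val) := by
      rw [← hu, ← hw]; exact hkey u w
    have e2 : f (x' + y') = φ (fun j => u' j.val) * χ (fun j => w' j.val) := by
      rw [← hu', ← hw']; exact hkey u' w'
    have e3 : f (x + y') = φ (fun j => u j.val) * χ (fun j => w' j.val) := by
      rw [← hu, ← hw']; exact hkey u w'
    have e4 : f (x' + y) = φ (fun j => u' j.val) * χ (fun j => w j.val) := by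
      rw [← hu', ← hw]; exact hkey u' w
    rw [e1, e2, e3, e4]; ring
  -- get a nonzero value of f below the top
  have hex : ∃ i : (j : Fin n) → Fin (d j), ψ i ≠ 0 := by
    by_contra hc
    push_neg at hc
    exact hne (PiLp.ext hc)
  obtain ⟨i, hi⟩ := hex
  have hle : (∑ j, ((i j : ℕ))) ≤ S₁ + S₂ := by
    rw [← hsplit]
    exact Finset.sum_le_sum fun j _ => by have := (i j).isLt; omega
  have := key_vanish f S₁ S₂ h1 h2 hf0 (by rw [hsplit] at hfS; exact hfS) H
    (∑ j, ((i j : ℕ))) hle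
  rw [hψ i] at hi
  exact hi this

/-- A vector of `Wᗮ` that is fully product is zero (polynomial factorization argument). -/
lemma wperp_no_product {n : ℕ} (hn : 2 ≤ n) (d : Fin n → ℕ) (hd : ∀ j, 2 ≤ d j)
    (ψ : EuclideanSpace ℂ ((j : Fin n) → Fin (d j)))
    (horth : ∀ k ≤ ∑ j, (d j - 1),
      (∑ i : (j : Fin n) → Fin (d j), (if (∑ j, ((i j : ℕ))) = k then ψ i else 0)) = 0)
    (hprod : FullyProduct ψ) : ψ = 0 := by
  classical
  obtain ⟨φ, hφ⟩ := hprod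
  set p : Fin n → Polynomial ℂ :=
    fun j => ∑ a : Fin (d j), Polynomial.C (φ j a) * Polynomial.X ^ (a : ℕ) with hp
  have hprod_eq : (∏ j, p j) = ∑ i : (j : Fin n) → Fin (d j),
      Polynomial.C (∏ j, φ j (i j)) * Polynomial.X ^ (∑ j, ((i j : ℕ))) := by
    rw [hp, Finset.prod_univ_sum, Fintype.piFinset_univ]
    refine Finset.sum_congr rfl fun i _ => ?_
    rw [Finset.prod_mul_distrib, map_prod, Finset.prod_pow_eq_pow_sum]
  have hcoeff : ∀ k, (∏ j, p j).coeff k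
      = ∑ i : (j : Fin n) → Fin (d j), (if (∑ j, ((i j : ℕ))) = k then ψ i else 0) := by
    intro k
    rw [hprod_eq, Polynomial.finset_sum_coeff]
    refine Finset.sum_congr rfl fun i _ => ?_
    rw [Polynomial.coeff_C_mul, Polynomial.coeff_X_pow, hφ i]
    by_cases h : (∑ j, ((i j : ℕ))) = k
    · simp [h]
    · simp [h, Ne.symm h]
  have hdeg : (∏ j, p j).natDegree ≤ ∑ j, (d j - 1) := by
    refine le_trans (Polynomial.natDegree_prod_le _ _) (Finset.sum_le_sum fun j _ => ?_)
    refine Polynomial.natDegree_sum_le_of_forall_le _ _ fun a _ => ?_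
    refine le_trans (Polynomial.natDegree_C_mul_X_pow_le _ _) ?_
    have := a.isLt; omega
  have hzero : (∏ j, p j) = 0 := by
    refine Polynomial.ext fun k => ?_
    rw [Polynomial.coeff_zero]
    rcases le_or_gt k (∑ j, (d j - 1)) with hk | hk
    · rw [hcoeff]; exact horth k hk
    · exact Polynomial.coeff_eq_zero_of_natDegree_lt (lt_of_le_of_lt hdeg hk)
  have hnonempty : (Finset.univ : Finset (Fin n)).Nonempty := by
    refine ⟨⟨0, by omega⟩, Finset.mem_univ _⟩
  obtain ⟨j, -, hj⟩ := Finset.prod_eq_zero_iff.mp hzero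
  have hφj : ∀ a, φ j a = 0 := by
    intro a
    have hca : (p j).coeff (a : ℕ) = φ j a := by
      rw [hp]
      rw [Polynomial.finset_sum_coeff]
      rw [Finset.sum_eq_single a]
      · simp [Polynomial.coeff_C_mul, Polynomial.coeff_X_pow]
      · intro b _ hb
        rw [Polynomial.coeff_C_mul, Polynomial.coeff_X_pow]
        have : ¬ ((a : ℕ) = (b : ℕ)) := fun hc => hb (Fin.ext hc.symm)
        simp [this]
      · intro hc
        exact absurd (Finset.mem_univ a) hc
    rw [hj, Polynomial.coeff_zero] at hca
    exact hca.symm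
  refine PiLp.ext fun i => ?_
  rw [hφ i]
  exact Finset.prod_eq_zero (Finset.mem_univ j) (hφj (i j))

/-- Theorem 7: the multipartite Hilbert space `⊗_j ℂ^{d_j}` decomposes as the
orthogonal direct sum
`span{|0…0⟩, |d₁−1 … dₙ−1⟩} ⊕ GES_{S−1} ⊕ CES_{D−S−1}`, where `S = ∑ (d j − 1)`
and `D = ∏ d j`, the last summand being a CES of the maximal possible dimension. -/
theorem multipartite_decomposition (n : ℕ) (hn : 2 ≤ n) (d : Fin n → ℕ)
    (hd : ∀ j, 2 ≤ d j) (S D : ℕ) (hS : S = ∑ j, (d j - 1)) (hD : D = ∏ j, d j)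
    (W : Submodule ℂ (EuclideanSpace ℂ ((j : Fin n) → Fin (d j))))
    (hW : W = Submodule.span ℂ {v | ∃ k ≤ S, v = gFrak n d k})
    (A : Submodule ℂ (EuclideanSpace ℂ ((j : Fin n) → Fin (d j))))
    (hA : A = Submodule.span ℂ
        {EuclideanSpace.single (fun j => (⟨0, by have := hd j; omega⟩ : Fin (d j))) (1 : ℂ),
         EuclideanSpace.single (fun j => (⟨d j - 1, by have := hd j; omega⟩ : Fin (d j))) (1 : ℂ)})
    (B : Submodule ℂ (EuclideanSpace ℂ ((j : Fin n) → Fin (d j))))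
    (hB : B = Submodule.span ℂ {v | ∃ k, 1 ≤ k ∧ k ≤ S - 1 ∧ v = gFrak n d k}) :
    Submodule.IsOrtho A B ∧ Submodule.IsOrtho A Wᗮ ∧ Submodule.IsOrtho B Wᗮ ∧
    A ⊔ B ⊔ Wᗮ = ⊤ ∧
    Module.finrank ℂ ↥B = S - 1 ∧
    (∀ ψ ∈ B, ψ ≠ 0 → GME ψ) ∧
    Module.finrank ℂ ↥(Wᗮ) = D - S - 1 ∧
    (∀ ψ ∈ Wᗮ, FullyProduct ψ → ψ = 0) := by
  classical
  have hd1 : ∀ j, 1 ≤ d j := fun j => le_trans one_le_two (hd j)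
  have hnS : n ≤ S := by
    rw [hS]
    calc n = ∑ _j : Fin n, 1 := by simp
    _ ≤ _ := Finset.sum_le_sum fun j _ => by have := hd j; omega
  have hS2 : 2 ≤ S := le_trans hn hnS
  -- the two extreme states
  have hg0 : EuclideanSpace.single (fun j => (⟨0, by have := hd j; omega⟩ : Fin (d j))) (1 : ℂ)
      = gFrak n d 0 := by
    refine PiLp.ext fun i => ?_
    rw [EuclideanSpace.single_apply]
    show _ = if (∑ j, ((i j : ℕ))) = 0 then (1:ℂ) else 0
    by_cases h : i = (fun j => (⟨0, by have := hd j; omega⟩ : Fin (d j)))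
    · have : (∑ j, ((i j : ℕ))) = 0 := by
        rw [h]; simp
      simp [h, this]
    · have : ¬ ((∑ j, ((i j : ℕ))) = 0) := by
        intro hz
        refine h (funext fun j => Fin.ext ?_)
        have := Finset.sum_eq_zero_iff.mp hz j (Finset.mem_univ j)
        simpa using this
      simp [h, this]
  have hgS : EuclideanSpace.single (fun j => (⟨d j - 1, by have := hd j; omega⟩ : Fin (d j))) (1 : ℂ)
      = gFrak n d S := by
    refine PiLp.ext fun i => ?_
    rw [EuclideanSpace.single_apply]
    show _ = if (∑ j, ((i j : ℕ))) = S then (1:ℂ) else 0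
    by_cases h : i = (fun j => (⟨d j - 1, by have := hd j; omega⟩ : Fin (d j)))
    · have : (∑ j, ((i j : ℕ))) = S := by
        rw [h, hS]
      rw [if_pos h, if_pos this]
    · have : ¬ ((∑ j, ((i j : ℕ))) = S) := by
        intro hz
        rw [hS] at hz
        have hle : ∀ j ∈ Finset.univ, ((i j : ℕ)) ≤ d j - 1 :=
          fun j _ => by have := (i j).isLt; omega
        have := (Finset.sum_eq_sum_iff_of_le hle).mp hz
        exact h (funext fun j => Fin.ext (this j (Finset.mem_univ j)))
      simp [h, this]
  have hA' : A = Submodule.span ℂ {gFrak n d 0, gFrak n d S} := by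
    rw [hA, hg0, hgS]
  -- the generating families
  have hBset : {v | ∃ k, 1 ≤ k ∧ k ≤ S - 1 ∧ v = gFrak n d k}
      = Set.range (fun m : Fin (S - 1) => gFrak n d ((m : ℕ) + 1)) := by
    ext u
    constructor
    · rintro ⟨k, hk1, hk2, rfl⟩
      have hk' : k - 1 + 1 = k := by omega
      exact ⟨⟨k - 1, by omega⟩, by simp only [Fin.val_mk, hk']⟩
    · rintro ⟨m, rfl⟩
      exact ⟨(m : ℕ) + 1, by omega, by have := m.isLt; omega, rfl⟩
  have hWset : {v | ∃ k ≤ S, v = gFrak n d k}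
      = Set.range (fun m : Fin (S + 1) => gFrak n d (m : ℕ)) := by
    ext u
    constructor
    · rintro ⟨k, hk, rfl⟩
      exact ⟨⟨k, by omega⟩, rfl⟩
    · rintro ⟨m, rfl⟩
      exact ⟨(m : ℕ), by have := m.isLt; omega, rfl⟩
  have liB : LinearIndependent ℂ (fun m : Fin (S - 1) => gFrak n d ((m : ℕ) + 1)) := by
    refine gFrak_linearIndependent d hd1 _ (fun a b hab => Fin.ext (by omega)) fun m => ?_
    rw [← hS]; have := m.isLt; omega
  have liW : LinearIndependent ℂ (fun m : Fin (S + 1) => gFrak n d (m : ℕ)) := by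
    refine gFrak_linearIndependent d hd1 _ (fun a b hab => Fin.ext (by omega)) fun m => ?_
    rw [← hS]; have := m.isLt; omega
  have hrB : Module.finrank ℂ ↥B = S - 1 := by
    rw [hB, hBset, finrank_span_eq_card liB]
    simp
  have hrW : Module.finrank ℂ ↥W = S + 1 := by
    rw [hW, hWset, finrank_span_eq_card liW]
    simp
  have hAW : A ≤ W := by
    rw [hA', hW]
    refine Submodule.span_mono ?_
    intro u hu
    simp only [Set.mem_insert_iff, Set.mem_singleton_iff] at hu
    rcases hu with rfl | rfl
    · exact ⟨0, Nat.zero_le _, rfl⟩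
    · exact ⟨S, le_rfl, rfl⟩
  have hBW : B ≤ W := by
    rw [hB, hW]
    refine Submodule.span_mono ?_
    rintro u ⟨k, hk1, hk2, rfl⟩
    exact ⟨k, by omega, rfl⟩
  have hoAB : Submodule.IsOrtho A B := by
    rw [hA', hB]
    rw [Submodule.isOrtho_span]
    intro u hu v hv
    simp only [Set.mem_insert_iff, Set.mem_singleton_iff] at hu
    obtain ⟨k, hk1, hk2, rfl⟩ := hv
    rcases hu with rfl | rfl
    · exact gFrak_inner_zero d (by omega)
    · exact gFrak_inner_zero d (by omega)
  have hoAW : Submodule.IsOrtho A Wᗮ :=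
    (Submodule.isOrtho_orthogonal_right W).mono_left hAW
  have hoBW : Submodule.IsOrtho B Wᗮ :=
    (Submodule.isOrtho_orthogonal_right W).mono_left hBW
  have hsup : A ⊔ B ⊔ Wᗮ = ⊤ := by
    have hABW : A ⊔ B = W := by
      rw [hA', hB, hW, ← Submodule.span_union]
      congr 1
      ext u
      simp only [Set.mem_union, Set.mem_insert_iff, Set.mem_singleton_iff, Set.mem_setOf_eq]
      constructor
      · rintro ((rfl | rfl) | ⟨k, hk1, hk2, rfl⟩)
        · exact ⟨0, Nat.zero_le _, rfl⟩
        · exact ⟨S, le_rfl, rfl⟩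
        · exact ⟨k, by omega, rfl⟩
      · rintro ⟨k, hk, rfl⟩
        by_cases hk0 : k = 0
        · subst hk0; exact Or.inl (Or.inl rfl)
        by_cases hkS : k = S
        · subst hkS; exact Or.inl (Or.inr rfl)
        · exact Or.inr ⟨k, by omega, by omega, rfl⟩
    rw [hABW]
    exact Submodule.sup_orthogonal_of_hasOrthogonalProjection
  have hrE : Module.finrank ℂ (EuclideanSpace ℂ ((j : Fin n) → Fin (d j))) = D := by
    rw [finrank_euclideanSpace, hD]
    simp [Fintype.card_pi]
  have hrWperp : Module.finrank ℂ ↥(Wᗮ) = D - S - 1 := by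
    have := Submodule.finrank_add_finrank_orthogonal W
    rw [hrW, hrE] at this
    omega
  refine ⟨hoAB, hoAW, hoBW, hsup, hrB, ?_, hrWperp, ?_⟩
  · -- GME part
    intro ψ hψ hne
    rw [hB, hBset, Submodule.mem_span_range_iff_exists_fun] at hψ
    obtain ⟨c, hc⟩ := hψ
    set f : ℕ → ℂ := fun t => ∑ m : Fin (S - 1), c m * (if t = (m : ℕ) + 1 then 1 else 0)
      with hf
    have hψf : ∀ i, ψ i = f (∑ j, ((i j : ℕ))) := by
      intro i
      have happ : ψ i = ∑ m : Fin (S - 1), c m * (gFrak n d ((m : ℕ) + 1) i) := by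
        rw [← hc, WithLp.ofLp_sum, Finset.sum_apply]
        rfl
      rw [happ, hf]
      rfl
    have hf0 : f 0 = 0 := by
      rw [hf]
      refine Finset.sum_eq_zero fun m _ => ?_
      simp
    have hfS : f (∑ j, (d j - 1)) = 0 := by
      rw [hf, ← hS]
      refine Finset.sum_eq_zero fun m _ => ?_
      have hm := m.isLt
      have : ¬ (S = (m : ℕ) + 1) := by omega
      simp [this]
    exact gme_of_sum_dependent d hd f hf0 hfS ψ hψf hne
  · -- CES part
    intro ψ hψ hfp
    refine wperp_no_product hn d hd ψ (fun k hk => ?_) hfp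
    have hgW : gFrak n d k ∈ W := by
      rw [hW]
      exact Submodule.subset_span ⟨k, by omega, rfl⟩
    have horth := (Submodule.mem_orthogonal W ψ).mp hψ (gFrak n d k) hgW
    rw [PiLp.inner_apply] at horth
    refine Eq.trans (Finset.sum_congr rfl fun i _ => ?_) horth
    by_cases h : (∑ j, ((i j : ℕ))) = k
    · simp [RCLike.inner_apply, gFrak, h]
    · simp [RCLike.inner_apply, gFrak, h]
end
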